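/- Let p be an odd prime, γ a topological generator of 1 + pZ_p, k ≥ 2, n ≥ 1, and define log_{k,n}^± = ∏_{j=0}^{k−2} ∏_{1 ≤ i ≤ n, (−1)^i = ±1} Φ_i(γ^{−j}(1+T)) ∈ Z_p[T], where Φ_i(X) = (X^{p^i}−1)/(X^{p^{i−1}}−1). Then μ(log_{k,n}^±) = 0 and, with ε_{n+1} = sign((−1)^{n+1}) and q_n = Σ_{1 ≤ i ≤ n, parity of i opposite to n} (p^i − p^{i−1}), one has λ(log_{k,n}^{ε_{n+1}}) = (k−1)·q_n. -/

import Mathlib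

open scoped Classical

/-- The factor `Φ_i(γ^{-j}(1+T))`, where `Φ_i(X) = Σ_{t<p} X^{t p^{i-1}}` is the
`p^i`-th cyclotomic polynomial, viewed in `ℤ_p[[T]]`. -/
noncomputable def PhiFactor (p : ℕ) [Fact p.Prime] (γ : ℤ_[p]ˣ) (j i : ℕ) :
    PowerSeries ℤ_[p] :=
  ∑ t ∈ Finset.range p,
    (PowerSeries.C (R := ℤ_[p]) ((γ ^ (-(j : ℤ)) : ℤ_[p]ˣ) : ℤ_[p]) *
      (1 + PowerSeries.X)) ^ (t * p ^ (i - 1))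

/-- The half-logarithm at layer `n`:
`log_{k,n}^σ = ∏_{j=0}^{k-2} ∏_{1 ≤ i ≤ n, (-1)^i = σ} Φ_i(γ^{-j}(1+T))`. -/
noncomputable def logkn (p : ℕ) [Fact p.Prime] (γ : ℤ_[p]ˣ) (k n : ℕ) (σ : ℤ) :
    PowerSeries ℤ_[p] :=
  ∏ j ∈ Finset.range (k - 1),
    ∏ i ∈ (Finset.Icc 1 n).filter (fun i => (-1 : ℤ) ^ i = σ), PhiFactor p γ j i

/-- `q_n = Σ (p^i - p^{i-1})` over `1 ≤ i ≤ n` of parity opposite to `n`. -/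
def qn (p n : ℕ) : ℕ :=
  ∑ i ∈ (Finset.Icc 1 n).filter (fun i => i % 2 ≠ n % 2), (p ^ i - p ^ (i - 1))

section Aux

variable (p : ℕ) [Fact p.Prime]

lemma isUnit_iff_toZMod_ne_zero (x : ℤ_[p]) :
    IsUnit x ↔ PadicInt.toZMod x ≠ 0 := by
  rw [← IsLocalRing.notMem_maximalIdeal, ← PadicInt.ker_toZMod, RingHom.mem_ker]

instance : CharP (PowerSeries (ZMod p)) p :=
  charP_of_injective_ringHom (PowerSeries.C_injective (R := ZMod p)) p

lemma geom_id (i : ℕ) (hi : 1 ≤ i) :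
    ∑ t ∈ Finset.range p, (1 + PowerSeries.X : PowerSeries (ZMod p)) ^ (t * p ^ (i - 1))
      = PowerSeries.X ^ (p ^ i - p ^ (i - 1)) := by
  have hx : (PowerSeries.X : PowerSeries (ZMod p)) ^ (p ^ (i - 1)) ≠ 0 :=
    pow_ne_zero _ PowerSeries.X_ne_zero
  apply mul_right_cancel₀ hx
  have hY : ((1 + PowerSeries.X : PowerSeries (ZMod p)) ^ (p ^ (i-1)) - 1)
      = PowerSeries.X ^ (p ^ (i-1)) := by
    rw [add_pow_char_pow, one_pow, add_sub_cancel_left]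
  calc (∑ t ∈ Finset.range p, (1 + PowerSeries.X : PowerSeries (ZMod p)) ^ (t * p ^ (i-1)))
        * PowerSeries.X ^ (p ^ (i-1))
      = (∑ t ∈ Finset.range p,
          ((1 + PowerSeries.X : PowerSeries (ZMod p)) ^ (p ^ (i-1))) ^ t)
        * (((1 + PowerSeries.X : PowerSeries (ZMod p)) ^ (p ^ (i-1))) - 1) := by
        rw [hY]; congr 1; apply Finset.sum_congr rfl; intro t _
        rw [← pow_mul, mul_comm]
    _ = ((1 + PowerSeries.X : PowerSeries (ZMod p)) ^ (p ^ (i-1))) ^ p - 1 := geom_sum_mul _ _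
    _ = PowerSeries.X ^ (p ^ i) := by
        rw [← pow_mul]
        have : p ^ (i-1) * p = p ^ i := by
          rw [← pow_succ]; congr 1; omega
        rw [this, add_pow_char_pow, one_pow, add_sub_cancel_left]
    _ = PowerSeries.X ^ (p ^ i - p ^ (i-1)) * PowerSeries.X ^ (p ^ (i-1)) := by
        rw [← pow_add]; congr 1
        have : p ^ (i-1) ≤ p ^ i := Nat.pow_le_pow_right (Fact.out : p.Prime).pos (by omega)
        omega

lemma toZMod_gamma (γ : ℤ_[p]ˣ) (hγ : ‖(γ : ℤ_[p]) - 1‖ = (p : ℝ)⁻¹) (z : ℤ) :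
    PadicInt.toZMod ((γ ^ z : ℤ_[p]ˣ) : ℤ_[p]) = 1 := by
  have hp1 : (1 : ℝ) < p := by exact_mod_cast (Fact.out : p.Prime).one_lt
  have h0 : PadicInt.toZMod ((γ : ℤ_[p]) - 1) = 0 := by
    rw [← RingHom.mem_ker, PadicInt.ker_toZMod, IsLocalRing.mem_maximalIdeal,
      PadicInt.mem_nonunits, hγ]
    rw [inv_lt_one_iff₀]; right; exact hp1
  have h1 : PadicInt.toZMod ((γ : ℤ_[p])) = 1 := by
    have := map_sub (PadicInt.toZMod (p := p)) (γ : ℤ_[p]) 1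
    rw [h0, map_one] at this
    linear_combination -this
  have hu : Units.map (PadicInt.toZMod (p := p)).toMonoidHom γ = 1 := by
    ext; simpa using h1
  calc PadicInt.toZMod ((γ ^ z : ℤ_[p]ˣ) : ℤ_[p])
      = ((Units.map (PadicInt.toZMod (p := p)).toMonoidHom (γ ^ z) : (ZMod p)ˣ) : ZMod p) := rfl
    _ = 1 := by rw [map_zpow, hu, one_zpow, Units.val_one]

lemma map_phi (γ : ℤ_[p]ˣ) (hγ : ‖(γ : ℤ_[p]) - 1‖ = (p : ℝ)⁻¹) (j i : ℕ) (hi : 1 ≤ i) :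
    PowerSeries.map PadicInt.toZMod (PhiFactor p γ j i)
      = PowerSeries.X ^ (p ^ i - p ^ (i - 1)) := by
  rw [PhiFactor, map_sum, ← geom_id p i hi]
  apply Finset.sum_congr rfl
  intro t _
  rw [map_pow, map_mul, PowerSeries.map_C, toZMod_gamma p γ hγ, map_add, map_one,
    PowerSeries.map_X, map_one, one_mul]

lemma map_logkn (γ : ℤ_[p]ˣ) (hγ : ‖(γ : ℤ_[p]) - 1‖ = (p : ℝ)⁻¹) (k n : ℕ) (σ : ℤ) :
    PowerSeries.map PadicInt.toZMod (logkn p γ k n σ)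
      = PowerSeries.X ^ ((k - 1) *
          ∑ i ∈ (Finset.Icc 1 n).filter (fun i => (-1 : ℤ) ^ i = σ), (p ^ i - p ^ (i - 1))) := by
  rw [logkn, map_prod]
  have h : ∀ j ∈ Finset.range (k - 1),
      (∏ i ∈ (Finset.Icc 1 n).filter (fun i => (-1 : ℤ) ^ i = σ),
        PowerSeries.map PadicInt.toZMod (PhiFactor p γ j i))
      = PowerSeries.X ^
          (∑ i ∈ (Finset.Icc 1 n).filter (fun i => (-1 : ℤ) ^ i = σ), (p ^ i - p ^ (i - 1))) := by
    intro j _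
    rw [← Finset.prod_pow_eq_pow_sum]
    apply Finset.prod_congr rfl
    intro i hi
    have : 1 ≤ i := (Finset.mem_Icc.mp (Finset.mem_filter.mp hi).1).1
    exact map_phi p γ hγ j i this
  simp only [map_prod]
  rw [Finset.prod_congr rfl h, Finset.prod_const, Finset.card_range, ← pow_mul, Nat.mul_comm]

lemma parity_filter (n : ℕ) :
    (Finset.Icc 1 n).filter (fun i => (-1 : ℤ) ^ i = (-1 : ℤ) ^ (n + 1))
      = (Finset.Icc 1 n).filter (fun i => i % 2 ≠ n % 2) := by
  apply Finset.filter_congr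
  intro i _
  have key : ∀ a b : ℕ, ((-1 : ℤ) ^ a = (-1 : ℤ) ^ b ↔ a % 2 = b % 2) := by
    intro a b
    rcases Nat.even_or_odd a with ha | ha <;> rcases Nat.even_or_odd b with hb | hb <;>
      simp [ha.neg_one_pow, hb.neg_one_pow, Nat.even_iff, Nat.odd_iff] at * <;> omega
  simp only [eq_iff_iff, key]
  omega

end Aux

/-- For `p` odd, `γ` a topological generator of `1 + pℤ_p` (i.e. `‖γ - 1‖ = 1/p`),
`k ≥ 2` and `n ≥ 1`: `μ(log_{k,n}^±) = 0` (some coefficient is a unit, for both signs),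
and `λ(log_{k,n}^{ε_{n+1}}) = (k-1)·q_n` with `ε_{n+1} = (-1)^{n+1}` (the coefficient at
`(k-1)q_n` is a unit and no earlier coefficient is). -/
theorem stmt_15 (p : ℕ) [Fact p.Prime] (hodd : p ≠ 2) (k n : ℕ) (hk : 2 ≤ k)
    (hn : 1 ≤ n) (γ : ℤ_[p]ˣ) (hγ : ‖(γ : ℤ_[p]) - 1‖ = (p : ℝ)⁻¹) :
    (∀ σ : ℤ, σ = 1 ∨ σ = -1 →
      ∃ i, IsUnit (PowerSeries.coeff (R := ℤ_[p]) i (logkn p γ k n σ))) ∧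
    IsUnit (PowerSeries.coeff (R := ℤ_[p]) ((k - 1) * qn p n)
      (logkn p γ k n ((-1) ^ (n + 1)))) ∧
    (∀ i < (k - 1) * qn p n,
      ¬ IsUnit (PowerSeries.coeff (R := ℤ_[p]) i (logkn p γ k n ((-1) ^ (n + 1))))) := by
  have key : ∀ (σ : ℤ) (m : ℕ),
      PadicInt.toZMod (PowerSeries.coeff (R := ℤ_[p]) m (logkn p γ k n σ))
        = if m = (k - 1) * ∑ i ∈ (Finset.Icc 1 n).filter (fun i => (-1 : ℤ) ^ i = σ),
            (p ^ i - p ^ (i - 1)) then 1 else 0 := by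
    intro σ m
    rw [← PowerSeries.coeff_map, map_logkn p γ hγ k n σ, PowerSeries.coeff_X_pow]
  have hq : (∑ i ∈ (Finset.Icc 1 n).filter
      (fun i => (-1 : ℤ) ^ i = (-1 : ℤ) ^ (n + 1)), (p ^ i - p ^ (i - 1))) = qn p n := by
    rw [parity_filter]; rfl
  refine ⟨?_, ?_, ?_⟩
  · intro σ _
    refine ⟨(k - 1) * ∑ i ∈ (Finset.Icc 1 n).filter (fun i => (-1 : ℤ) ^ i = σ),
        (p ^ i - p ^ (i - 1)), ?_⟩
    rw [isUnit_iff_toZMod_ne_zero, key]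
    simp
  · rw [isUnit_iff_toZMod_ne_zero, key, hq]
    simp
  · intro i hi
    rw [isUnit_iff_toZMod_ne_zero, key, hq, not_not]
    rw [if_neg (by omega)]
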